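/- Let k be the Gaussian kernel with bandwidth b and let MMD²(𝒯) = E[k(𝒯(z̃),𝒯(z̃'))] − 2E[k(𝒯(z̃),z̄)] + E[k(z̄,z̄')] for a block map 𝒯(x,y)=(x+εv(x,y), y). Then the Gâteaux derivative of MMD² at the identity in direction v equals −(2/b²)E_{z̃,z̃'}[k(z̃,z̃')(x̃−x̃')ᵀ(v(z̃)−v(z̃'))] + (4/b²)E_{z̃,z̄}[k(z̃,z̄)(x̃−x̄)ᵀ v(z̃)]. -/

import Mathlib

open MeasureTheory Metric

lemma gauss_mul_le (b : ℝ) (hb : 0 < b) (s : ℝ) (hs : 0 ≤ s) :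
    s * Real.exp (-(s ^ 2) / b ^ 2) ≤ b := by
  rcases le_or_gt s b with h | h
  · have h1 : Real.exp (-(s ^ 2) / b ^ 2) ≤ 1 := by
      apply Real.exp_le_one_iff.mpr
      have : (0:ℝ) < b ^ 2 := by positivity
      apply div_nonpos_of_nonpos_of_nonneg <;> nlinarith
    nlinarith [Real.exp_pos (-(s ^ 2) / b ^ 2)]
  · have hbs : 0 < s := lt_trans hb h
    have h1 : s ^ 2 / b ^ 2 ≤ Real.exp (s ^ 2 / b ^ 2) := (Real.add_one_le_exp _).trans' (by linarith)
    have h2 : Real.exp (-(s ^ 2) / b ^ 2) ≤ b ^ 2 / s ^ 2 := by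
      rw [neg_div, Real.exp_neg, inv_le_comm₀ (Real.exp_pos _) (by positivity), inv_div]
      exact h1
    have h3 : s * Real.exp (-(s ^ 2) / b ^ 2) ≤ s * (b ^ 2 / s ^ 2) :=
      mul_le_mul_of_nonneg_left h2 hbs.le
    have h4 : s * (b ^ 2 / s ^ 2) = b ^ 2 / s := by field_simp
    have h5 : b ^ 2 / s ≤ b := by rw [div_le_iff₀ hbs]; nlinarith
    linarith

lemma ptwise_deriv {n : ℕ} (b : ℝ) (P Q : EuclideanSpace ℝ (Fin n)) (R : ℝ)
    (ε : ℝ) :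
    HasDerivAt (fun t : ℝ => Real.exp (-(‖P + t • Q‖ ^ 2 + R) / b ^ 2))
      (Real.exp (-(‖P + ε • Q‖ ^ 2 + R) / b ^ 2) *
        (-(2 / b ^ 2) * inner ℝ (P + ε • Q) Q)) ε := by
  have hexpand : ∀ t : ℝ, ‖P + t • Q‖ ^ 2 = ‖P‖ ^ 2 + 2 * inner ℝ P Q * t + ‖Q‖ ^ 2 * t ^ 2 := by
    intro t
    rw [@norm_add_sq_real, real_inner_smul_right, norm_smul]
    simp [Real.norm_eq_abs, mul_pow, sq_abs]
    ring
  have h1 : HasDerivAt (fun t : ℝ => -(‖P‖ ^ 2 + 2 * inner ℝ P Q * t + ‖Q‖ ^ 2 * t ^ 2 + R) / b ^ 2)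
      (-(2 * inner ℝ P Q + ‖Q‖ ^ 2 * (2 * ε)) / b ^ 2) ε := by
    have hid : HasDerivAt (fun t : ℝ => (2 * inner ℝ P Q : ℝ) * t) (2 * inner ℝ P Q) ε := by
      simpa using (hasDerivAt_id ε).const_mul (2 * (inner ℝ P Q : ℝ))
    have hsq : HasDerivAt (fun t : ℝ => ‖Q‖ ^ 2 * t ^ 2) (‖Q‖ ^ 2 * (2 * ε)) ε := by
      simpa using (hasDerivAt_pow 2 ε).const_mul (‖Q‖ ^ 2)
    have := (((hasDerivAt_const ε (‖P‖ ^ 2)).add hid).add hsq).add_const R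
    simpa using this.neg.div_const (b ^ 2)
  have h2 := h1.exp
  have hfun : (fun t : ℝ => Real.exp (-(‖P‖ ^ 2 + 2 * inner ℝ P Q * t + ‖Q‖ ^ 2 * t ^ 2 + R) / b ^ 2))
      = (fun t : ℝ => Real.exp (-(‖P + t • Q‖ ^ 2 + R) / b ^ 2)) := by
    funext t; rw [hexpand t]
  rw [hfun] at h2
  convert h2 using 1
  rw [hexpand ε, inner_add_left, real_inner_smul_left, real_inner_self_eq_norm_sq]
  ring

lemma key_deriv {α : Type*} [MeasurableSpace α] (μ : Measure α) [IsProbabilityMeasure μ]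
    {n : ℕ} {b D : ℝ} (hb : 0 < b) (hD : 0 ≤ D)
    (p q : α → EuclideanSpace ℝ (Fin n)) (r : α → ℝ)
    (hp : Measurable p) (hq : Measurable q) (hr : Measurable r)
    (hr0 : ∀ a, 0 ≤ r a) (hqD : ∀ a, ‖q a‖ ≤ D) :
    Integrable (fun a =>
        Real.exp (-(‖p a‖ ^ 2 + r a) / b ^ 2) * (-(2 / b ^ 2) * inner ℝ (p a) (q a))) μ ∧
    HasDerivAt (fun ε : ℝ => ∫ a, Real.exp (-(‖p a + ε • q a‖ ^ 2 + r a) / b ^ 2) ∂μ)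
      (∫ a, Real.exp (-(‖p a‖ ^ 2 + r a) / b ^ 2) * (-(2 / b ^ 2) * inner ℝ (p a) (q a)) ∂μ) 0 := by
  set F : ℝ → α → ℝ := fun ε a => Real.exp (-(‖p a + ε • q a‖ ^ 2 + r a) / b ^ 2) with hF
  set F' : ℝ → α → ℝ := fun ε a =>
    Real.exp (-(‖p a + ε • q a‖ ^ 2 + r a) / b ^ 2) * (-(2 / b ^ 2) * inner ℝ (p a + ε • q a) (q a))
    with hF'
  have hmeas : ∀ ε : ℝ, Measurable (F ε) := by
    intro ε
    apply Measurable.exp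
    apply Measurable.div_const
    apply Measurable.neg
    exact ((((hp.add (hq.const_smul ε)).norm.pow_const 2)).add hr)
  have hmeas' : Measurable (F' 0) := by
    have h0 : Measurable fun a => inner (𝕜 := ℝ) (p a + (0:ℝ) • q a) (q a) :=
      (hp.add (hq.const_smul (0:ℝ))).inner hq
    exact (hmeas 0).mul (h0.const_mul _)
  have key : ∀ a, ∀ ε : ℝ, HasDerivAt (fun t => F t a) (F' ε a) ε := fun a ε =>
    ptwise_deriv b (p a) (q a) (r a) ε
  have hbound : ∀ a, ∀ ε ∈ ball (0:ℝ) 1, ‖F' ε a‖ ≤ 2 * D / b := by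
    intro a ε _
    have hs : (0:ℝ) ≤ ‖p a + ε • q a‖ := norm_nonneg _
    have hexp_le : Real.exp (-(‖p a + ε • q a‖ ^ 2 + r a) / b ^ 2)
        ≤ Real.exp (-(‖p a + ε • q a‖ ^ 2) / b ^ 2) := by
      apply Real.exp_le_exp.mpr
      apply div_le_div_of_nonneg_right ?_ (by positivity)
      · linarith [hr0 a]
    have hCS : |inner (𝕜 := ℝ) (p a + ε • q a) (q a)| ≤ ‖p a + ε • q a‖ * D := by
      refine (abs_real_inner_le_norm _ _).trans ?_
      exact mul_le_mul_of_nonneg_left (hqD a) hs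
    have hg := gauss_mul_le b hb (‖p a + ε • q a‖) hs
    rw [Real.norm_eq_abs, abs_mul, abs_mul]
    rw [Real.abs_exp]
    have hb2 : (0:ℝ) < b ^ 2 := by positivity
    have h1 : |(-(2 / b ^ 2) : ℝ)| = 2 / b ^ 2 := by
      rw [abs_neg, abs_of_pos]; positivity
    rw [h1]
    calc Real.exp (-(‖p a + ε • q a‖ ^ 2 + r a) / b ^ 2) *
          (2 / b ^ 2 * |inner (𝕜 := ℝ) (p a + ε • q a) (q a)|)
        ≤ Real.exp (-(‖p a + ε • q a‖ ^ 2) / b ^ 2) * (2 / b ^ 2 * (‖p a + ε • q a‖ * D)) := by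
          apply mul_le_mul hexp_le ?_ (by positivity) (Real.exp_pos _).le
          exact mul_le_mul_of_nonneg_left hCS (by positivity)
      _ = (2 * D / b ^ 2) * (‖p a + ε • q a‖ * Real.exp (-(‖p a + ε • q a‖ ^ 2) / b ^ 2)) := by
          ring
      _ ≤ (2 * D / b ^ 2) * b := by
          apply mul_le_mul_of_nonneg_left hg (by positivity)
      _ = 2 * D / b := by field_simp
  have hInt : Integrable (F 0) μ := by
    apply Integrable.mono' (integrable_const 1) (hmeas 0).aestronglyMeasurable
    filter_upwards with a
    rw [Real.norm_eq_abs, Real.abs_exp]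
    apply Real.exp_le_one_iff.mpr
    apply div_nonpos_of_nonpos_of_nonneg
    · rw [neg_nonpos]
      have h2 : (0:ℝ) ≤ ‖p a + (0:ℝ) • q a‖ ^ 2 := by positivity
      linarith [hr0 a]
    · positivity
  have main := hasDerivAt_integral_of_dominated_loc_of_deriv_le (F := F) (F' := F') (μ := μ)
    (bound := fun _ => 2 * D / b) (ball_mem_nhds 0 one_pos)
    (Filter.Eventually.of_forall fun ε => (hmeas ε).aestronglyMeasurable)
    hInt hmeas'.aestronglyMeasurable
    (Filter.Eventually.of_forall fun a ε hε => hbound a ε hε)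
    (integrable_const _)
    (Filter.Eventually.of_forall fun a ε _ => key a ε)
  have heq : (fun a =>
      Real.exp (-(‖p a‖ ^ 2 + r a) / b ^ 2) * (-(2 / b ^ 2) * inner ℝ (p a) (q a))) = F' 0 := by
    funext a; simp [hF']
  constructor
  · rw [heq]; exact main.1
  · rw [heq]; exact main.2

theorem stmt_18 {n m : ℕ} (b : ℝ) (hb : 0 < b)
    (πx : Measure (EuclideanSpace ℝ (Fin n))) (πy : Measure (EuclideanSpace ℝ (Fin m)))
    [IsProbabilityMeasure πx] [IsProbabilityMeasure πy]
    (πxy : Measure (EuclideanSpace ℝ (Fin n) × EuclideanSpace ℝ (Fin m)))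
    [IsProbabilityMeasure πxy]
    (k : (EuclideanSpace ℝ (Fin n) × EuclideanSpace ℝ (Fin m)) →
         (EuclideanSpace ℝ (Fin n) × EuclideanSpace ℝ (Fin m)) → ℝ)
    (hk : ∀ z z', k z z' =
      Real.exp (-(‖z.1 - z'.1‖ ^ 2 + ‖z.2 - z'.2‖ ^ 2) / b ^ 2))
    (v : EuclideanSpace ℝ (Fin n) × EuclideanSpace ℝ (Fin m) → EuclideanSpace ℝ (Fin n))
    (hv : Measurable v) (hvbdd : ∃ C, ∀ z, ‖v z‖ ≤ C) :
    HasDerivAt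
      (fun ε : ℝ =>
        (∫ z, ∫ z', k (z.1 + ε • v z, z.2) (z'.1 + ε • v z', z'.2)
            ∂(πx.prod πy) ∂(πx.prod πy))
        - 2 * (∫ z, ∫ w, k (z.1 + ε • v z, z.2) w ∂πxy ∂(πx.prod πy))
        + ∫ w, ∫ w', k w w' ∂πxy ∂πxy)
      (-(2 / b ^ 2) * (∫ z, ∫ z', k z z' * inner ℝ (z.1 - z'.1) (v z - v z')
            ∂(πx.prod πy) ∂(πx.prod πy))
        + (4 / b ^ 2) * ∫ z, ∫ w, k z w * inner ℝ (z.1 - w.1) (v z) ∂πxy ∂(πx.prod πy))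
      0 := by
  obtain ⟨C, hC⟩ := hvbdd
  have hC0 : 0 ≤ C := le_trans (norm_nonneg _) (hC (0, 0))
  set μ : Measure (EuclideanSpace ℝ (Fin n) × EuclideanSpace ℝ (Fin m)) := πx.prod πy with hμ
  -- the A term
  have hA := key_deriv (μ.prod μ) hb (by linarith : (0:ℝ) ≤ C + C)
    (fun a => a.1.1 - a.2.1) (fun a => v a.1 - v a.2) (fun a => ‖a.1.2 - a.2.2‖ ^ 2)
    (measurable_fst.fst.sub measurable_snd.fst)
    ((hv.comp measurable_fst).sub (hv.comp measurable_snd))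
    ((measurable_fst.snd.sub measurable_snd.snd).norm.pow_const 2)
    (fun a => by positivity)
    (fun a => (norm_sub_le _ _).trans (add_le_add (hC _) (hC _)))
  -- the B term
  have hB := key_deriv (μ.prod πxy) hb hC0
    (fun a => a.1.1 - a.2.1) (fun a => v a.1) (fun a => ‖a.1.2 - a.2.2‖ ^ 2)
    (measurable_fst.fst.sub measurable_snd.fst)
    (hv.comp measurable_fst)
    ((measurable_fst.snd.sub measurable_snd.snd).norm.pow_const 2)
    (fun a => by positivity)
    (fun a => hC _)
  -- pointwise identities
  have hkA : ∀ (ε : ℝ) (z z' : EuclideanSpace ℝ (Fin n) × EuclideanSpace ℝ (Fin m)),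
      k (z.1 + ε • v z, z.2) (z'.1 + ε • v z', z'.2)
        = Real.exp (-(‖(z.1 - z'.1) + ε • (v z - v z')‖ ^ 2 + ‖z.2 - z'.2‖ ^ 2) / b ^ 2) := by
    intro ε z z'
    rw [hk]
    have : (z.1 + ε • v z) - (z'.1 + ε • v z') = (z.1 - z'.1) + ε • (v z - v z') := by
      rw [smul_sub]; abel
    simp only [this]
  have hkB : ∀ (ε : ℝ) (z w : EuclideanSpace ℝ (Fin n) × EuclideanSpace ℝ (Fin m)),
      k (z.1 + ε • v z, z.2) w
        = Real.exp (-(‖(z.1 - w.1) + ε • v z‖ ^ 2 + ‖z.2 - w.2‖ ^ 2) / b ^ 2) := by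
    intro ε z w
    rw [hk]
    have : (z.1 + ε • v z) - w.1 = (z.1 - w.1) + ε • v z := by abel
    simp only [this]
  -- integrability of the exponential integrands
  have hIntExp : ∀ (ν : Measure ((EuclideanSpace ℝ (Fin n) × EuclideanSpace ℝ (Fin m)) ×
      (EuclideanSpace ℝ (Fin n) × EuclideanSpace ℝ (Fin m)))) [IsProbabilityMeasure ν]
      (q : ((EuclideanSpace ℝ (Fin n) × EuclideanSpace ℝ (Fin m)) ×
        (EuclideanSpace ℝ (Fin n) × EuclideanSpace ℝ (Fin m))) → EuclideanSpace ℝ (Fin n))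
      (hq : Measurable q) (ε : ℝ),
      Integrable (fun a => Real.exp (-(‖(a.1.1 - a.2.1) + ε • q a‖ ^ 2
        + ‖a.1.2 - a.2.2‖ ^ 2) / b ^ 2)) ν := by
    intro ν _ q hq ε
    have hm : Measurable fun a : ((EuclideanSpace ℝ (Fin n) × EuclideanSpace ℝ (Fin m)) ×
        (EuclideanSpace ℝ (Fin n) × EuclideanSpace ℝ (Fin m))) =>
        Real.exp (-(‖(a.1.1 - a.2.1) + ε • q a‖ ^ 2 + ‖a.1.2 - a.2.2‖ ^ 2) / b ^ 2) := by
      apply Measurable.exp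
      apply Measurable.div_const
      apply Measurable.neg
      exact (((measurable_fst.fst.sub measurable_snd.fst).add
        (hq.const_smul ε)).norm.pow_const 2).add
        ((measurable_fst.snd.sub measurable_snd.snd).norm.pow_const 2)
    apply Integrable.mono' (integrable_const 1) hm.aestronglyMeasurable
    filter_upwards with a
    rw [Real.norm_eq_abs, Real.abs_exp]
    apply Real.exp_le_one_iff.mpr
    apply div_nonpos_of_nonpos_of_nonneg
    · rw [neg_nonpos]; positivity
    · positivity
  -- rewrite A as an integral over the product measure
  have hAeq : ∀ ε : ℝ,
      (∫ z, ∫ z', k (z.1 + ε • v z, z.2) (z'.1 + ε • v z', z'.2) ∂μ ∂μ)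
        = ∫ a, Real.exp (-(‖(a.1.1 - a.2.1) + ε • (v a.1 - v a.2)‖ ^ 2
            + ‖a.1.2 - a.2.2‖ ^ 2) / b ^ 2) ∂(μ.prod μ) := by
    intro ε
    have hint := hIntExp (μ.prod μ) (fun a => v a.1 - v a.2)
      ((hv.comp measurable_fst).sub (hv.comp measurable_snd)) ε
    have hint' : Integrable (Function.uncurry fun z z' =>
        k (z.1 + ε • v z, z.2) (z'.1 + ε • v z', z'.2)) (μ.prod μ) := by
      apply hint.congr
      filter_upwards with a
      exact (hkA ε a.1 a.2).symm
    rw [integral_integral hint']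
    exact integral_congr_ae (Filter.Eventually.of_forall fun a => hkA ε a.1 a.2)
  have hBeq : ∀ ε : ℝ,
      (∫ z, ∫ w, k (z.1 + ε • v z, z.2) w ∂πxy ∂μ)
        = ∫ a, Real.exp (-(‖(a.1.1 - a.2.1) + ε • v a.1‖ ^ 2
            + ‖a.1.2 - a.2.2‖ ^ 2) / b ^ 2) ∂(μ.prod πxy) := by
    intro ε
    have hint := hIntExp (μ.prod πxy) (fun a => v a.1) (hv.comp measurable_fst) ε
    have hint' : Integrable (Function.uncurry fun z w =>
        k (z.1 + ε • v z, z.2) w) (μ.prod πxy) := by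
      apply hint.congr
      filter_upwards with a
      exact (hkB ε a.1 a.2).symm
    rw [integral_integral hint']
    exact integral_congr_ae (Filter.Eventually.of_forall fun a => hkB ε a.1 a.2)
  -- HasDerivAt for the two nested-integral functions
  have hA' : HasDerivAt (fun ε : ℝ =>
      ∫ z, ∫ z', k (z.1 + ε • v z, z.2) (z'.1 + ε • v z', z'.2) ∂μ ∂μ)
      (∫ a, Real.exp (-(‖a.1.1 - a.2.1‖ ^ 2 + ‖a.1.2 - a.2.2‖ ^ 2) / b ^ 2) *
        (-(2 / b ^ 2) * inner ℝ (a.1.1 - a.2.1) (v a.1 - v a.2)) ∂(μ.prod μ)) 0 := by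
    have h := hA.2
    rwa [show (fun ε : ℝ => ∫ a, Real.exp (-(‖(a.1.1 - a.2.1) + ε • (v a.1 - v a.2)‖ ^ 2
        + ‖a.1.2 - a.2.2‖ ^ 2) / b ^ 2) ∂(μ.prod μ))
      = fun ε : ℝ => ∫ z, ∫ z', k (z.1 + ε • v z, z.2) (z'.1 + ε • v z', z'.2) ∂μ ∂μ
      from funext fun ε => (hAeq ε).symm] at h
  have hB' : HasDerivAt (fun ε : ℝ =>
      ∫ z, ∫ w, k (z.1 + ε • v z, z.2) w ∂πxy ∂μ)
      (∫ a, Real.exp (-(‖a.1.1 - a.2.1‖ ^ 2 + ‖a.1.2 - a.2.2‖ ^ 2) / b ^ 2) *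
        (-(2 / b ^ 2) * inner ℝ (a.1.1 - a.2.1) (v a.1)) ∂(μ.prod πxy)) 0 := by
    have h := hB.2
    rwa [show (fun ε : ℝ => ∫ a, Real.exp (-(‖(a.1.1 - a.2.1) + ε • v a.1‖ ^ 2
        + ‖a.1.2 - a.2.2‖ ^ 2) / b ^ 2) ∂(μ.prod πxy))
      = fun ε : ℝ => ∫ z, ∫ w, k (z.1 + ε • v z, z.2) w ∂πxy ∂μ
      from funext fun ε => (hBeq ε).symm] at h
  -- values of the derivative integrals in terms of the statement's nested integrals
  have hIA : (∫ z, ∫ z', k z z' * inner ℝ (z.1 - z'.1) (v z - v z') ∂μ ∂μ)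
      = ∫ a, k a.1 a.2 * inner ℝ (a.1.1 - a.2.1) (v a.1 - v a.2) ∂(μ.prod μ) := by
    have hint : Integrable (fun a => k a.1 a.2 *
        inner (𝕜 := ℝ) (a.1.1 - a.2.1) (v a.1 - v a.2)) (μ.prod μ) := by
      have := (hA.1.const_mul (-(b ^ 2 / 2)))
      apply this.congr
      filter_upwards with a
      rw [hk]
      have hb2 : (b:ℝ) ^ 2 ≠ 0 := by positivity
      field_simp
    exact integral_integral (f := fun z z' => k z z' * inner ℝ (z.1 - z'.1) (v z - v z')) hint
  have hIB : (∫ z, ∫ w, k z w * inner ℝ (z.1 - w.1) (v z) ∂πxy ∂μ)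
      = ∫ a, k a.1 a.2 * inner ℝ (a.1.1 - a.2.1) (v a.1) ∂(μ.prod πxy) := by
    have hint : Integrable (fun a => k a.1 a.2 *
        inner (𝕜 := ℝ) (a.1.1 - a.2.1) (v a.1)) (μ.prod πxy) := by
      have := (hB.1.const_mul (-(b ^ 2 / 2)))
      apply this.congr
      filter_upwards with a
      rw [hk]
      have hb2 : (b:ℝ) ^ 2 ≠ 0 := by positivity
      field_simp
    exact integral_integral (f := fun z w => k z w * inner ℝ (z.1 - w.1) (v z)) hint
  -- final assembly
  have hfinal := (hA'.sub (hB'.const_mul 2)).add_const (∫ w, ∫ w', k w w' ∂πxy ∂πxy)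
  refine hfinal.congr_deriv ?_
  symm
  rw [hIA, hIB]
  rw [show (-(2 / b ^ 2) : ℝ) * (∫ a, k a.1 a.2 *
        inner ℝ (a.1.1 - a.2.1) (v a.1 - v a.2) ∂(μ.prod μ))
      = ∫ a, (-(2 / b ^ 2) : ℝ) * (k a.1 a.2 *
        inner ℝ (a.1.1 - a.2.1) (v a.1 - v a.2)) ∂(μ.prod μ) from
    (integral_const_mul _ _).symm]
  rw [show ((4 / b ^ 2) : ℝ) * (∫ a, k a.1 a.2 *
        inner ℝ (a.1.1 - a.2.1) (v a.1) ∂(μ.prod πxy))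
      = ∫ a, ((4 / b ^ 2) : ℝ) * (k a.1 a.2 *
        inner ℝ (a.1.1 - a.2.1) (v a.1)) ∂(μ.prod πxy) from
    (integral_const_mul _ _).symm]
  rw [show (2:ℝ) * (∫ a, Real.exp (-(‖a.1.1 - a.2.1‖ ^ 2 + ‖a.1.2 - a.2.2‖ ^ 2) / b ^ 2) *
        (-(2 / b ^ 2) * inner ℝ (a.1.1 - a.2.1) (v a.1)) ∂(μ.prod πxy))
      = ∫ a, (2:ℝ) * (Real.exp (-(‖a.1.1 - a.2.1‖ ^ 2 + ‖a.1.2 - a.2.2‖ ^ 2) / b ^ 2) *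
        (-(2 / b ^ 2) * inner ℝ (a.1.1 - a.2.1) (v a.1))) ∂(μ.prod πxy) from
    (integral_const_mul _ _).symm]
  rw [sub_eq_add_neg, ← integral_neg]
  congr 1
  · exact integral_congr_ae (Filter.Eventually.of_forall fun a => by
      simp only [hk]; ring)
  · exact integral_congr_ae (Filter.Eventually.of_forall fun a => by
      simp only [hk]; ring)
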